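/- arXiv:1811.03931 — 2 statements merged into one kernel-verified Lean document; each statement's English description precedes it below -/
import Mathlib

section
/- Let λ₁, λ₂ > 0, T > 0, and let Π : ℕ × ℕ → ℝ be a bounded payoff function. Define the value function X(t, n₁, n₂) = Σ_{k₁=0}^∞ Σ_{k₂=0}^∞ Π(n₁+k₁, n₂+k₂) · P(k₁, λ₁(T−t)) · P(k₂, λ₂(T−t)) for t ∈ [0, T] and n₁, n₂ ∈ ℕ, where P(k, Λ) = e^{−Λ} Λ^k / k!. Then X(T, n₁, n₂) = Π(n₁, n₂), and for every t ∈ [0, T] the map t ↦ X(t, n₁, n₂) is differentiable with ∂_t X(t, n₁, n₂) = −λ₁ (X(t, n₁+1, n₂) − X(t, n₁, n₂)) − λ₂ (X(t, n₁, n₂+1) − X(t, n₁, n₂)). -/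
/-- The Poisson probability mass function `P(k, Λ) = e^{−Λ} Λ^k / k!`. -/
noncomputable def poissonP (Λ : ℝ) (k : ℕ) : ℝ :=
  Real.exp (-Λ) * Λ ^ k / (Nat.factorial k)

/-- The value of a European bet with payoff `pay` at time `t` with current scores
`(n₁, n₂)`, in the Poisson model with intensities `lam₁, lam₂` and terminal time `T`. -/
noncomputable def betValue (lam₁ lam₂ T : ℝ) (pay : ℕ × ℕ → ℝ)
    (t : ℝ) (n₁ n₂ : ℕ) : ℝ :=
  ∑' k₁ : ℕ, ∑' k₂ : ℕ,
    pay (n₁ + k₁, n₂ + k₂) * poissonP (lam₁ * (T - t)) k₁ * poissonP (lam₂ * (T - t)) k₂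

noncomputable def prevP (Λ : ℝ) : ℕ → ℝ
  | 0 => 0
  | (k+1) => poissonP Λ k

noncomputable def bP (M : ℝ) (k : ℕ) : ℝ := Real.exp M * (M ^ k / (Nat.factorial k))

noncomputable def bprev (M : ℝ) : ℕ → ℝ
  | 0 => 0
  | (k+1) => bP M k

lemma summable_bP (M : ℝ) : Summable (bP M) :=
  (Real.summable_pow_div_factorial M).mul_left _

lemma summable_bprev (M : ℝ) : Summable (bprev M) :=
  (summable_nat_add_iff 1).mp (by simpa [bprev] using summable_bP M)

lemma bP_nonneg {M : ℝ} (hM : 0 ≤ M) (k : ℕ) : 0 ≤ bP M k := by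
  unfold bP; positivity

lemma bprev_nonneg {M : ℝ} (hM : 0 ≤ M) (k : ℕ) : 0 ≤ bprev M k := by
  cases k with
  | zero => simp [bprev]
  | succ j => exact bP_nonneg hM j

lemma abs_poissonP_le {Λ M : ℝ} (hM : |Λ| ≤ M) (k : ℕ) : |poissonP Λ k| ≤ bP M k := by
  have hM0 : 0 ≤ M := le_trans (abs_nonneg _) hM
  have h1 : |Real.exp (-Λ)| ≤ Real.exp M := by
    rw [abs_of_pos (Real.exp_pos _)]
    exact Real.exp_le_exp.mpr (le_trans (neg_le_abs Λ) hM)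
  have h2 : |Λ ^ k| ≤ M ^ k := by
    rw [abs_pow]; exact pow_le_pow_left₀ (abs_nonneg _) hM k
  calc |poissonP Λ k| = |Real.exp (-Λ)| * |Λ ^ k| / (Nat.factorial k) := by
        rw [poissonP, abs_div, abs_mul, Nat.abs_cast]
    _ ≤ Real.exp M * M ^ k / (Nat.factorial k) := by gcongr
    _ = bP M k := by rw [bP]; ring

lemma abs_prevP_le {Λ M : ℝ} (hM : |Λ| ≤ M) (k : ℕ) : |prevP Λ k| ≤ bprev M k := by
  cases k with
  | zero => simp [prevP, bprev]
  | succ j => exact abs_poissonP_le hM j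

lemma summable_term {c : ℕ × ℕ → ℝ} {C : ℝ} (hc : ∀ p, |c p| ≤ C)
    {g₁ g₂ a b : ℕ → ℝ} (h₁ : ∀ k, |g₁ k| ≤ a k) (h₂ : ∀ k, |g₂ k| ≤ b k)
    (ha : Summable a) (hb : Summable b) :
    Summable (fun p : ℕ × ℕ => c p * g₁ p.1 * g₂ p.2) := by
  have ha' : ∀ k, 0 ≤ a k := fun k => le_trans (abs_nonneg _) (h₁ k)
  have hb' : ∀ k, 0 ≤ b k := fun k => le_trans (abs_nonneg _) (h₂ k)
  have hC0 : 0 ≤ C := le_trans (abs_nonneg _) (hc (0, 0))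
  have hu : Summable (fun p : ℕ × ℕ => C * (a p.1 * b p.2)) :=
    (ha.mul_of_nonneg hb ha' hb').mul_left C
  refine hu.of_norm_bounded fun p => ?_
  rw [Real.norm_eq_abs, abs_mul, abs_mul]
  calc |c p| * |g₁ p.1| * |g₂ p.2| ≤ C * a p.1 * b p.2 :=
        mul_le_mul (mul_le_mul (hc p) (h₁ p.1) (abs_nonneg _) hC0) (h₂ p.2) (abs_nonneg _)
          (mul_nonneg hC0 (ha' p.1))
    _ = C * (a p.1 * b p.2) := by ring

lemma summable_fiber {c g b : ℕ → ℝ} {C : ℝ} (hC0 : 0 ≤ C) (hc : ∀ l, |c l| ≤ C)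
    (h : ∀ l, |g l| ≤ b l) (hb : Summable b) : Summable (fun l => c l * g l) := by
  refine (hb.mul_left C).of_norm_bounded fun l => ?_
  rw [Real.norm_eq_abs, abs_mul]
  exact mul_le_mul (hc l) (h l) (abs_nonneg _) hC0

lemma hasDerivAt_poissonP (lam T : ℝ) (k : ℕ) (s : ℝ) :
    HasDerivAt (fun x : ℝ => poissonP (lam * (T - x)) k)
      (lam * (poissonP (lam * (T - s)) k - prevP (lam * (T - s)) k)) s := by
  have hu : HasDerivAt (fun x : ℝ => lam * (T - x)) (lam * (-1)) s :=
    (((hasDerivAt_id s).const_sub T).const_mul lam)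
  have he : HasDerivAt (fun x : ℝ => Real.exp (-(lam * (T - x))))
      (Real.exp (-(lam * (T - s))) * (-(lam * (-1)))) s := hu.neg.exp
  have hp : HasDerivAt (fun x : ℝ => (lam * (T - x)) ^ k)
      ((k : ℝ) * (lam * (T - s)) ^ (k - 1) * (lam * (-1))) s := hu.pow k
  have h := (he.mul hp).div_const (Nat.factorial k : ℝ)
  simp only [poissonP]
  refine h.congr_deriv ?_
  cases k with
  | zero => simp [prevP, poissonP]; ring
  | succ j =>
      simp only [prevP, poissonP, Nat.factorial_succ]
      have h1 : (Nat.factorial j : ℝ) ≠ 0 := Nat.cast_ne_zero.mpr j.factorial_ne_zero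
      push_cast
      field_simp
      ring

lemma betValue_eq_tsum (lam₁ lam₂ T : ℝ) (pay : ℕ × ℕ → ℝ) {C : ℝ}
    (hC : ∀ p, |pay p| ≤ C) (t : ℝ) (n₁ n₂ : ℕ) :
    betValue lam₁ lam₂ T pay t n₁ n₂ =
      ∑' p : ℕ × ℕ, pay (n₁ + p.1, n₂ + p.2) * poissonP (lam₁ * (T - t)) p.1
        * poissonP (lam₂ * (T - t)) p.2 := by
  have hC0 : 0 ≤ C := le_trans (abs_nonneg _) (hC (0, 0))
  have hsum : Summable (fun p : ℕ × ℕ => pay (n₁ + p.1, n₂ + p.2)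
      * poissonP (lam₁ * (T - t)) p.1 * poissonP (lam₂ * (T - t)) p.2) :=
    summable_term (fun p => hC _) (abs_poissonP_le le_rfl) (abs_poissonP_le le_rfl)
      (summable_bP _) (summable_bP _)
  have hfib : ∀ k : ℕ, Summable (fun l : ℕ => pay (n₁ + k, n₂ + l)
      * poissonP (lam₁ * (T - t)) k * poissonP (lam₂ * (T - t)) l) := by
    intro k
    refine summable_fiber (C := C * bP (|lam₁ * (T - t)|) k)
      (mul_nonneg hC0 (bP_nonneg (abs_nonneg _) k)) (fun l => ?_)
      (abs_poissonP_le le_rfl) (summable_bP _)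
    rw [abs_mul]
    exact mul_le_mul (hC _) (abs_poissonP_le le_rfl k) (abs_nonneg _) hC0
  rw [betValue]
  exact (Summable.tsum_prod' hsum hfib).symm

/-- Kolmogorov forward equation: the value of a European bet satisfies the terminal
condition `X(T, n₁, n₂) = Π(n₁, n₂)` and the PIDE
`∂ₜX = −λ₁ δ₁X − λ₂ δ₂X` on `[0, T]`. -/
theorem betValue_kolmogorov_forward
    (lam₁ lam₂ T : ℝ) (hlam₁ : 0 < lam₁) (hlam₂ : 0 < lam₂) (hT : 0 < T)
    (pay : ℕ × ℕ → ℝ) (hpay : ∃ C : ℝ, ∀ p : ℕ × ℕ, |pay p| ≤ C)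
    (n₁ n₂ : ℕ) :
    betValue lam₁ lam₂ T pay T n₁ n₂ = pay (n₁, n₂) ∧
    ∀ t ∈ Set.Icc (0 : ℝ) T,
      HasDerivAt (fun s : ℝ => betValue lam₁ lam₂ T pay s n₁ n₂)
        (-lam₁ * (betValue lam₁ lam₂ T pay t (n₁ + 1) n₂ - betValue lam₁ lam₂ T pay t n₁ n₂)
          - lam₂ * (betValue lam₁ lam₂ T pay t n₁ (n₂ + 1) - betValue lam₁ lam₂ T pay t n₁ n₂))
        t := by
  obtain ⟨C, hC⟩ := hpay
  have hC0 : 0 ≤ C := le_trans (abs_nonneg _) (hC (0, 0))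
  have hP0 : ∀ k : ℕ, k ≠ 0 → poissonP 0 k = 0 := by
    intro k hk; simp [poissonP, zero_pow hk]
  constructor
  · rw [betValue]
    simp only [sub_self, mul_zero]
    rw [tsum_eq_single 0 (fun k₁ hk₁ => by simp [hP0 k₁ hk₁])]
    rw [tsum_eq_single 0 (fun k₂ hk₂ => by simp [hP0 k₂ hk₂])]
    simp [poissonP]
  · intro t ht
    set M₁ : ℝ := lam₁ * (T + 1) with hM₁def
    set M₂ : ℝ := lam₂ * (T + 1) with hM₂def
    have hM₁0 : 0 ≤ M₁ := by positivity
    have hM₂0 : 0 ≤ M₂ := by positivity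
    have habs : ∀ lam : ℝ, 0 < lam → ∀ y ∈ Set.Ioo (-1 : ℝ) (T + 1),
        |lam * (T - y)| ≤ lam * (T + 1) := by
      intro lam hl y hy
      rw [abs_mul, abs_of_pos hl]
      have h : |T - y| ≤ T + 1 := by
        rw [abs_le]; constructor <;> [linarith [hy.2]; linarith [hy.1]]
      exact mul_le_mul_of_nonneg_left h hl.le
    set F : ℕ × ℕ → ℝ → ℝ := fun p s =>
      pay (n₁ + p.1, n₂ + p.2) * poissonP (lam₁ * (T - s)) p.1
        * poissonP (lam₂ * (T - s)) p.2 with hFdef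
    set F' : ℕ × ℕ → ℝ → ℝ := fun p s =>
      pay (n₁ + p.1, n₂ + p.2)
          * (lam₁ * (poissonP (lam₁ * (T - s)) p.1 - prevP (lam₁ * (T - s)) p.1))
          * poissonP (lam₂ * (T - s)) p.2
        + pay (n₁ + p.1, n₂ + p.2) * poissonP (lam₁ * (T - s)) p.1
          * (lam₂ * (poissonP (lam₂ * (T - s)) p.2 - prevP (lam₂ * (T - s)) p.2)) with hF'def
    have hderiv : ∀ (p : ℕ × ℕ) (y : ℝ), HasDerivAt (F p) (F' p y) y := by
      intro p y
      simp only [hFdef, hF'def]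
      exact ((hasDerivAt_poissonP lam₁ T p.1 y).const_mul
        (pay (n₁ + p.1, n₂ + p.2))).mul (hasDerivAt_poissonP lam₂ T p.2 y)
    set u : ℕ × ℕ → ℝ := fun p =>
      C * (lam₁ * (bP M₁ p.1 + bprev M₁ p.1)) * bP M₂ p.2
        + C * bP M₁ p.1 * (lam₂ * (bP M₂ p.2 + bprev M₂ p.2)) with hudef
    have ha1 : Summable (fun k : ℕ => C * (lam₁ * (bP M₁ k + bprev M₁ k))) :=
      (((summable_bP M₁).add (summable_bprev M₁)).mul_left lam₁).mul_left C
    have ha2 : Summable (fun k : ℕ => C * bP M₁ k) := (summable_bP M₁).mul_left C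
    have ha3 : Summable (fun l : ℕ => lam₂ * (bP M₂ l + bprev M₂ l)) :=
      ((summable_bP M₂).add (summable_bprev M₂)).mul_left lam₂
    have hu1 : Summable (fun p : ℕ × ℕ =>
        C * (lam₁ * (bP M₁ p.1 + bprev M₁ p.1)) * bP M₂ p.2) :=
      ha1.mul_of_nonneg (summable_bP M₂)
          (fun k => mul_nonneg hC0 (mul_nonneg hlam₁.le
            (add_nonneg (bP_nonneg hM₁0 k) (bprev_nonneg hM₁0 k))))
          (fun l => bP_nonneg hM₂0 l)
    have hu2 : Summable (fun p : ℕ × ℕ =>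
        C * bP M₁ p.1 * (lam₂ * (bP M₂ p.2 + bprev M₂ p.2))) :=
      ha2.mul_of_nonneg ha3
          (fun k => mul_nonneg hC0 (bP_nonneg hM₁0 k))
          (fun l => mul_nonneg hlam₂.le
            (add_nonneg (bP_nonneg hM₂0 l) (bprev_nonneg hM₂0 l)))
    have hu : Summable u := by
      simp only [hudef]; exact hu1.add hu2
    have hbound : ∀ (p : ℕ × ℕ) (y : ℝ), y ∈ Set.Ioo (-1 : ℝ) (T + 1) → ‖F' p y‖ ≤ u p := by
      intro p y hy
      simp only [hF'def, hudef]
      have e₁ := abs_poissonP_le (habs lam₁ hlam₁ y hy) p.1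
      have e₂ := abs_poissonP_le (habs lam₂ hlam₂ y hy) p.2
      have e₃ := abs_prevP_le (habs lam₁ hlam₁ y hy) p.1
      have e₄ := abs_prevP_le (habs lam₂ hlam₂ y hy) p.2
      have epay := hC (n₁ + p.1, n₂ + p.2)
      have hd₁ : |lam₁ * (poissonP (lam₁ * (T - y)) p.1 - prevP (lam₁ * (T - y)) p.1)|
          ≤ lam₁ * (bP M₁ p.1 + bprev M₁ p.1) := by
        rw [abs_mul, abs_of_pos hlam₁]
        exact mul_le_mul_of_nonneg_left ((abs_sub _ _).trans (add_le_add e₁ e₃)) hlam₁.le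
      have hd₂ : |lam₂ * (poissonP (lam₂ * (T - y)) p.2 - prevP (lam₂ * (T - y)) p.2)|
          ≤ lam₂ * (bP M₂ p.2 + bprev M₂ p.2) := by
        rw [abs_mul, abs_of_pos hlam₂]
        exact mul_le_mul_of_nonneg_left ((abs_sub _ _).trans (add_le_add e₂ e₄)) hlam₂.le
      rw [Real.norm_eq_abs]
      refine (abs_add_le _ _).trans (add_le_add ?_ ?_)
      · rw [abs_mul, abs_mul]
        exact mul_le_mul (mul_le_mul epay hd₁ (abs_nonneg _) hC0) e₂ (abs_nonneg _)
          (mul_nonneg hC0 (mul_nonneg hlam₁.le (add_nonneg (bP_nonneg hM₁0 p.1) (bprev_nonneg hM₁0 p.1))))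
      · rw [abs_mul, abs_mul]
        exact mul_le_mul (mul_le_mul epay e₁ (abs_nonneg _) hC0) hd₂ (abs_nonneg _)
          (mul_nonneg hC0 (bP_nonneg hM₁0 p.1))
    have hmem : t ∈ Set.Ioo (-1 : ℝ) (T + 1) := ⟨by linarith [ht.1], by linarith [ht.2]⟩
    have hsum_t : Summable (fun p => F p t) := by
      simp only [hFdef]
      exact summable_term (fun p => hC _) (abs_poissonP_le le_rfl) (abs_poissonP_le le_rfl)
        (summable_bP _) (summable_bP _)
    have hkey := hasDerivAt_tsum_of_isPreconnected hu isOpen_Ioo isPreconnected_Ioo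
      (fun p y hy => hderiv p y) hbound hmem hsum_t hmem
    have heq : (fun z => ∑' p : ℕ × ℕ, F p z)
        = fun s : ℝ => betValue lam₁ lam₂ T pay s n₁ n₂ := by
      funext z; simp only [hFdef]; exact (betValue_eq_tsum lam₁ lam₂ T pay hC z n₁ n₂).symm
    rw [heq] at hkey
    -- compute the sum of derivatives
    set B : ℕ × ℕ → ℝ := fun p =>
      pay (n₁ + p.1, n₂ + p.2) * prevP (lam₁ * (T - t)) p.1
        * poissonP (lam₂ * (T - t)) p.2 with hBdef
    set Cc : ℕ × ℕ → ℝ := fun p =>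
      pay (n₁ + p.1, n₂ + p.2) * poissonP (lam₁ * (T - t)) p.1
        * prevP (lam₂ * (T - t)) p.2 with hCcdef
    have hB : Summable B := by
      simp only [hBdef]
      exact summable_term (fun p => hC _) (abs_prevP_le le_rfl) (abs_poissonP_le le_rfl)
        (summable_bprev _) (summable_bP _)
    have hCc : Summable Cc := by
      simp only [hCcdef]
      exact summable_term (fun p => hC _) (abs_poissonP_le le_rfl) (abs_prevP_le le_rfl)
        (summable_bP _) (summable_bprev _)
    have hBsum : ∑' p, B p = betValue lam₁ lam₂ T pay t (n₁ + 1) n₂ := by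
      have hinj : Function.Injective (fun p : ℕ × ℕ => (p.1 + 1, p.2)) := by
        intro p q h
        simp only [Prod.mk.injEq, add_left_inj] at h
        exact Prod.ext h.1 h.2
      have hsupp : Function.support B ⊆ Set.range (fun p : ℕ × ℕ => (p.1 + 1, p.2)) := by
        rintro ⟨k, l⟩ hp
        cases k with
        | zero => exact absurd (by simp [hBdef, prevP]) hp
        | succ j => exact ⟨(j, l), rfl⟩
      have h1 : ∑' p : ℕ × ℕ, B (p.1 + 1, p.2) = ∑' p, B p := hinj.tsum_eq hsupp
      have h2 : ∀ p : ℕ × ℕ, B (p.1 + 1, p.2)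
          = pay ((n₁ + 1) + p.1, n₂ + p.2) * poissonP (lam₁ * (T - t)) p.1
            * poissonP (lam₂ * (T - t)) p.2 := by
        intro p
        simp only [hBdef]
        simp only [prevP]
        rw [show n₁ + (p.1 + 1) = n₁ + 1 + p.1 from by omega]
      rw [← h1, tsum_congr h2, ← betValue_eq_tsum lam₁ lam₂ T pay hC t (n₁ + 1) n₂]
    have hCsum : ∑' p, Cc p = betValue lam₁ lam₂ T pay t n₁ (n₂ + 1) := by
      have hinj : Function.Injective (fun p : ℕ × ℕ => (p.1, p.2 + 1)) := by
        intro p q h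
        simp only [Prod.mk.injEq, add_left_inj] at h
        exact Prod.ext h.1 h.2
      have hsupp : Function.support Cc ⊆ Set.range (fun p : ℕ × ℕ => (p.1, p.2 + 1)) := by
        rintro ⟨k, l⟩ hp
        cases l with
        | zero => exact absurd (by simp [hCcdef, prevP]) hp
        | succ j => exact ⟨(k, j), rfl⟩
      have h1 : ∑' p : ℕ × ℕ, Cc (p.1, p.2 + 1) = ∑' p, Cc p := hinj.tsum_eq hsupp
      have h2 : ∀ p : ℕ × ℕ, Cc (p.1, p.2 + 1)
          = pay (n₁ + p.1, (n₂ + 1) + p.2) * poissonP (lam₁ * (T - t)) p.1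
            * poissonP (lam₂ * (T - t)) p.2 := by
        intro p
        simp only [hCcdef]
        simp only [prevP]
        rw [show n₂ + (p.2 + 1) = n₂ + 1 + p.2 from by omega]
      rw [← h1, tsum_congr h2, ← betValue_eq_tsum lam₁ lam₂ T pay hC t n₁ (n₂ + 1)]
    have hAsum : ∑' p, F p t = betValue lam₁ lam₂ T pay t n₁ n₂ := by
      simp only [hFdef]
      exact (betValue_eq_tsum lam₁ lam₂ T pay hC t n₁ n₂).symm
    have hptw : ∀ p : ℕ × ℕ, F' p t = lam₁ * (F p t - B p) + lam₂ * (F p t - Cc p) := by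
      intro p
      simp only [hF'def, hFdef, hBdef, hCcdef]
      ring
    have hfinal : ∑' p, F' p t
        = lam₁ * ((∑' p, F p t) - ∑' p, B p) + lam₂ * ((∑' p, F p t) - ∑' p, Cc p) := by
      rw [tsum_congr hptw,
        Summable.tsum_add ((hsum_t.sub hB).mul_left lam₁) ((hsum_t.sub hCc).mul_left lam₂),
        tsum_mul_left, tsum_mul_left, Summable.tsum_sub hsum_t hB, Summable.tsum_sub hsum_t hCc]
    rw [hfinal, hAsum, hBsum, hCsum] at hkey
    refine hkey.congr_deriv ?_
    ring
end

section
/- Let T > 0, t ∈ [0, T], λ₂ > 0, and let Π : ℕ × ℕ → ℝ be a bounded payoff function. Define X(λ₁, n₁, n₂) = Σ_{k₁=0}^∞ Σ_{k₂=0}^∞ Π(n₁+k₁, n₂+k₂) · P(k₁, λ₁(T−t)) · P(k₂, λ₂(T−t)), where P(k, Λ) = e^{−Λ} Λ^k / k!. Then for every λ₁ > 0 and n₁, n₂ ∈ ℕ, the map λ₁ ↦ X(λ₁, n₁, n₂) is differentiable with ∂X/∂λ₁ = (T−t) · (X(λ₁, n₁+1, n₂) − X(λ₁, n₁, n₂));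 the analogous identity holds for differentiation in λ₂ with the forward difference in the second score argument. -/
lemma poissonP_nonneg {Λ : ℝ} (h : 0 ≤ Λ) (k : ℕ) : 0 ≤ poissonP Λ k := by
  unfold poissonP; positivity

lemma poissonP_le {Λ M : ℝ} (h0 : 0 ≤ Λ) (hM : Λ ≤ M) (k : ℕ) :
    poissonP Λ k ≤ M ^ k / (Nat.factorial k) := by
  unfold poissonP
  have h1 : Real.exp (-Λ) * Λ ^ k ≤ M ^ k := by
    calc Real.exp (-Λ) * Λ ^ k ≤ 1 * Λ ^ k :=
          mul_le_mul_of_nonneg_right (Real.exp_le_one_iff.mpr (neg_nonpos.mpr h0))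
            (pow_nonneg h0 k)
    _ = Λ ^ k := one_mul _
    _ ≤ M ^ k := pow_le_pow_left₀ h0 hM k
  have h2 : (0 : ℝ) < (Nat.factorial k : ℝ) := by positivity
  exact div_le_div_of_nonneg_right h1 h2.le

lemma summable_poissonP {Λ : ℝ} (h : 0 ≤ Λ) : Summable (poissonP Λ) :=
  Summable.of_nonneg_of_le (poissonP_nonneg h) (poissonP_le h le_rfl)
    (Real.summable_pow_div_factorial Λ)

lemma hasDerivAt_poissonP_s3 (k : ℕ) (Λ : ℝ) :
    HasDerivAt (fun x => poissonP x k)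
      ((if k = 0 then 0 else poissonP Λ (k - 1)) - poissonP Λ k) Λ := by
  have hexp : HasDerivAt (fun x : ℝ => Real.exp (-x)) (-Real.exp (-Λ)) Λ := by
    simpa using (hasDerivAt_neg Λ).exp
  cases k with
  | zero =>
    simp only [poissonP, pow_zero, Nat.factorial_zero, Nat.cast_one, mul_one, div_one,
      reduceIte, zero_sub]
    exact hexp
  | succ k =>
    have hpow : HasDerivAt (fun x : ℝ => x ^ (k + 1)) ((k + 1 : ℕ) * Λ ^ k) Λ :=
      hasDerivAt_pow (k + 1) Λ
    have h := (hexp.mul hpow).div_const ((Nat.factorial (k + 1) : ℝ))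
    simp only [poissonP, Nat.succ_ne_zero, if_false, Nat.add_sub_cancel]
    refine h.congr_deriv (Eq.symm ?_)
    have hf : (Nat.factorial (k + 1) : ℝ) = (k + 1 : ℝ) * (Nat.factorial k : ℝ) := by
      rw [Nat.factorial_succ]; push_cast; ring
    have hfk : (Nat.factorial k : ℝ) ≠ 0 := by positivity
    have hfk1 : (Nat.factorial (k + 1) : ℝ) ≠ 0 := by positivity
    rw [hf]
    field_simp
    push_cast
    ring

lemma key_deriv {τ C : ℝ} (hτ : 0 ≤ τ) (hC : 0 ≤ C) (a : ℕ → ℝ) (ha : ∀ k, |a k| ≤ C)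
    {lam : ℝ} (hlam : 0 < lam) :
    HasDerivAt (fun l : ℝ => ∑' k : ℕ, a k * poissonP (l * τ) k)
      (τ * ((∑' k : ℕ, a (k + 1) * poissonP (lam * τ) k)
        - ∑' k : ℕ, a k * poissonP (lam * τ) k)) lam := by
  set M := (lam + 1) * τ with hM
  have hM0 : 0 ≤ M := by positivity
  set g' : ℕ → ℝ → ℝ := fun k l =>
    a k * (((if k = 0 then 0 else poissonP (l * τ) (k - 1)) - poissonP (l * τ) k) * τ) with hg'def
  set u : ℕ → ℝ := fun k =>
    C * (((if k = 0 then 0 else M ^ (k - 1) / (Nat.factorial (k - 1))) +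
      M ^ k / (Nat.factorial k)) * τ) with hu
  have hMsum : Summable (fun k : ℕ => M ^ k / (Nat.factorial k : ℝ)) :=
    Real.summable_pow_div_factorial M
  have hshift : Summable (fun k : ℕ =>
      if k = 0 then (0 : ℝ) else M ^ (k - 1) / (Nat.factorial (k - 1))) := by
    rw [← summable_nat_add_iff 1]
    exact hMsum.congr fun k => by simp
  have husum : Summable u := by
    apply Summable.mul_left
    apply Summable.mul_right
    exact hshift.add hMsum
  -- bounds for l in the open interval
  have hmem : ∀ l ∈ Set.Ioo (0 : ℝ) (lam + 1), 0 ≤ l * τ ∧ l * τ ≤ M := by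
    intro l hl
    exact ⟨mul_nonneg hl.1.le hτ, mul_le_mul_of_nonneg_right (by linarith [hl.2]) hτ⟩
  have hg : ∀ (k : ℕ) (l : ℝ), l ∈ Set.Ioo (0 : ℝ) (lam + 1) →
      HasDerivAt (fun z : ℝ => a k * poissonP (z * τ) k) (g' k l) l := by
    intro k l _
    have h1 : HasDerivAt (fun z : ℝ => z * τ) τ l := by simpa using (hasDerivAt_id l).mul_const τ
    have h2 := (hasDerivAt_poissonP_s3 k (l * τ)).comp l h1
    exact h2.const_mul (a k)
  have hbound : ∀ (k : ℕ) (l : ℝ), l ∈ Set.Ioo (0 : ℝ) (lam + 1) → ‖g' k l‖ ≤ u k := by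
    intro k l hl
    obtain ⟨h0, h1⟩ := hmem l hl
    have hP : |poissonP (l * τ) k| ≤ M ^ k / (Nat.factorial k) := by
      rw [abs_of_nonneg (poissonP_nonneg h0 k)]
      exact poissonP_le h0 h1 k
    have hP' : |(if k = 0 then 0 else poissonP (l * τ) (k - 1))|
        ≤ (if k = 0 then 0 else M ^ (k - 1) / (Nat.factorial (k - 1))) := by
      cases k with
      | zero => simp
      | succ k =>
        simp only [Nat.succ_ne_zero, if_false, Nat.add_sub_cancel]
        rw [abs_of_nonneg (poissonP_nonneg h0 k)]
        exact poissonP_le h0 h1 k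
    rw [hg'def]
    simp only [Real.norm_eq_abs, abs_mul]
    rw [abs_of_nonneg hτ]
    have habs : |(if k = 0 then 0 else poissonP (l * τ) (k - 1)) - poissonP (l * τ) k|
        ≤ (if k = 0 then 0 else M ^ (k - 1) / (Nat.factorial (k - 1)))
          + M ^ k / (Nat.factorial k) :=
      (abs_sub _ _).trans (add_le_add hP' hP)
    calc |a k| * (|(if k = 0 then 0 else poissonP (l * τ) (k - 1)) - poissonP (l * τ) k| * τ)
        ≤ C * (((if k = 0 then 0 else M ^ (k - 1) / (Nat.factorial (k - 1)))
          + M ^ k / (Nat.factorial k)) * τ) := by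
          apply mul_le_mul (ha k) (mul_le_mul_of_nonneg_right habs hτ)
            (by positivity) hC
    _ = u k := rfl
  have hsum0 : Summable (fun k => a k * poissonP (lam * τ) k) := by
    apply Summable.of_norm_bounded (hMsum.mul_left C)
    intro k
    have h0 : 0 ≤ lam * τ := mul_nonneg hlam.le hτ
    have h1 : lam * τ ≤ M := mul_le_mul_of_nonneg_right (by linarith) hτ
    rw [Real.norm_eq_abs, abs_mul, abs_of_nonneg (poissonP_nonneg h0 k)]
    exact mul_le_mul (ha k) (poissonP_le h0 h1 k) (poissonP_nonneg h0 k) hC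
  have hlam_mem : lam ∈ Set.Ioo (0 : ℝ) (lam + 1) := ⟨hlam, lt_add_one lam⟩
  have hder := hasDerivAt_tsum_of_isPreconnected husum isOpen_Ioo
    (isPreconnected_Ioo) hg hbound hlam_mem hsum0 hlam_mem
  refine hder.congr_deriv (Eq.symm ?_)
  -- now identify the sum of derivatives
  have hsum1 : Summable (fun k => a k *
      (if k = 0 then (0:ℝ) else poissonP (lam * τ) (k - 1))) := by
    apply Summable.of_norm_bounded (hshift.mul_left C)
    intro k
    have h0 : 0 ≤ lam * τ := mul_nonneg hlam.le hτ
    have h1 : lam * τ ≤ M := mul_le_mul_of_nonneg_right (by linarith) hτ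
    rw [Real.norm_eq_abs, abs_mul]
    cases k with
    | zero => simp
    | succ k =>
      simp only [Nat.succ_ne_zero, if_false, Nat.add_sub_cancel]
      rw [abs_of_nonneg (poissonP_nonneg h0 k)]
      exact mul_le_mul (ha (k+1)) (poissonP_le h0 h1 k) (poissonP_nonneg h0 k) hC
  have step1 : ∑' k, g' k lam = τ * ∑' k, (a k *
      (if k = 0 then (0:ℝ) else poissonP (lam * τ) (k - 1)) - a k * poissonP (lam * τ) k) := by
    rw [← tsum_mul_left]
    exact tsum_congr fun k => by rw [hg'def]; ring
  rw [step1, Summable.tsum_sub hsum1 hsum0]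
  congr 2
  rw [Summable.tsum_eq_zero_add hsum1]
  simp

lemma betValue_eq (lam₁ lam₂ T t : ℝ) (pay : ℕ × ℕ → ℝ) (n₁ n₂ : ℕ) :
    betValue lam₁ lam₂ T pay t n₁ n₂
      = ∑' k₁ : ℕ, (∑' k₂ : ℕ, pay (n₁ + k₁, n₂ + k₂) * poissonP (lam₂ * (T - t)) k₂)
          * poissonP (lam₁ * (T - t)) k₁ := by
  unfold betValue
  refine tsum_congr fun k₁ => ?_
  rw [← tsum_mul_right]
  exact tsum_congr fun k₂ => by ring

lemma inner_abs_le {Λ C : ℝ} (hΛ : 0 ≤ Λ) (hC : 0 ≤ C) (b : ℕ → ℝ) (hb : ∀ k, |b k| ≤ C) :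
    |∑' k : ℕ, b k * poissonP Λ k| ≤ C * ∑' k : ℕ, poissonP Λ k := by
  have hP := summable_poissonP hΛ
  have hbd : ∀ k, ‖b k * poissonP Λ k‖ ≤ C * poissonP Λ k := by
    intro k
    rw [Real.norm_eq_abs, abs_mul, abs_of_nonneg (poissonP_nonneg hΛ k)]
    exact mul_le_mul_of_nonneg_right (hb k) (poissonP_nonneg hΛ k)
  have hsum : Summable (fun k => ‖b k * poissonP Λ k‖) :=
    Summable.of_nonneg_of_le (fun k => norm_nonneg _) hbd (hP.mul_left C)
  calc |∑' k : ℕ, b k * poissonP Λ k| ≤ ∑' k : ℕ, ‖b k * poissonP Λ k‖ := by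
        simpa using norm_tsum_le_tsum_norm hsum
  _ ≤ ∑' k : ℕ, C * poissonP Λ k := Summable.tsum_le_tsum hbd hsum (hP.mul_left C)
  _ = C * ∑' k : ℕ, poissonP Λ k := tsum_mul_left

lemma half_deriv (T t lam₂ : ℝ) (hτ : 0 ≤ T - t) (hlam₂ : 0 ≤ lam₂)
    (pay : ℕ × ℕ → ℝ) (C : ℝ) (hpay : ∀ p, |pay p| ≤ C)
    (lam₁ : ℝ) (hlam₁ : 0 < lam₁) (n₁ n₂ : ℕ) :
    HasDerivAt (fun l : ℝ => betValue l lam₂ T pay t n₁ n₂)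
      ((T - t) * (betValue lam₁ lam₂ T pay t (n₁ + 1) n₂
        - betValue lam₁ lam₂ T pay t n₁ n₂)) lam₁ := by
  set τ := T - t with hτdef
  have hΛ₂ : 0 ≤ lam₂ * τ := mul_nonneg hlam₂ hτ
  set a : ℕ → ℝ := fun k₁ => ∑' k₂ : ℕ, pay (n₁ + k₁, n₂ + k₂) * poissonP (lam₂ * τ) k₂
    with hadef
  have hC : 0 ≤ C := (abs_nonneg _).trans (hpay (0, 0))
  set C' : ℝ := C * ∑' k₂ : ℕ, poissonP (lam₂ * τ) k₂ with hC'def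
  have hC' : 0 ≤ C' := by
    apply mul_nonneg hC
    exact tsum_nonneg (poissonP_nonneg hΛ₂)
  have ha : ∀ k, |a k| ≤ C' := fun k =>
    inner_abs_le hΛ₂ hC _ (fun k₂ => hpay _)
  have hkey := key_deriv hτ hC' a ha hlam₁
  have hfun : (fun l : ℝ => betValue l lam₂ T pay t n₁ n₂)
      = fun l : ℝ => ∑' k : ℕ, a k * poissonP (l * τ) k := by
    funext l
    exact betValue_eq l lam₂ T t pay n₁ n₂
  have hshift : ∀ k : ℕ, a (k + 1)
      = ∑' k₂ : ℕ, pay (n₁ + 1 + k, n₂ + k₂) * poissonP (lam₂ * τ) k₂ := by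
    intro k
    simp only [hadef]
    refine tsum_congr fun k₂ => ?_
    have : n₁ + (k + 1) = n₁ + 1 + k := by omega
    rw [this]
  have hv1 : betValue lam₁ lam₂ T pay t (n₁ + 1) n₂
      = ∑' k : ℕ, a (k + 1) * poissonP (lam₁ * τ) k := by
    rw [betValue_eq]
    exact tsum_congr fun k => by rw [hshift k]
  have hv0 : betValue lam₁ lam₂ T pay t n₁ n₂
      = ∑' k : ℕ, a k * poissonP (lam₁ * τ) k := betValue_eq lam₁ lam₂ T t pay n₁ n₂
  rw [hfun, hv1, hv0]
  exact hkey

lemma betValue_swap (lam₁ lam₂ T t : ℝ) (h₁ : 0 ≤ lam₁ * (T - t)) (h₂ : 0 ≤ lam₂ * (T - t))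
    (pay : ℕ × ℕ → ℝ) (C : ℝ) (hpay : ∀ p, |pay p| ≤ C) (n₁ n₂ : ℕ) :
    betValue lam₁ lam₂ T pay t n₁ n₂
      = betValue lam₂ lam₁ T (fun p => pay p.swap) t n₂ n₁ := by
  have hC : 0 ≤ C := (abs_nonneg _).trans (hpay (0, 0))
  set f : ℕ → ℕ → ℝ := fun k₁ k₂ =>
    pay (n₁ + k₁, n₂ + k₂) * poissonP (lam₁ * (T - t)) k₁ * poissonP (lam₂ * (T - t)) k₂
    with hfdef
  have hP₁ := summable_poissonP h₁
  have hP₂ := summable_poissonP h₂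
  have hprod : Summable (fun p : ℕ × ℕ =>
      poissonP (lam₁ * (T - t)) p.1 * poissonP (lam₂ * (T - t)) p.2) :=
    hP₁.mul_of_nonneg hP₂ (poissonP_nonneg h₁) (poissonP_nonneg h₂)
  have hsum : Summable (Function.uncurry f) := by
    apply Summable.of_norm_bounded (hprod.mul_left C)
    rintro ⟨k₁, k₂⟩
    simp only [Function.uncurry, hfdef, Real.norm_eq_abs, abs_mul]
    rw [abs_of_nonneg (poissonP_nonneg h₁ k₁), abs_of_nonneg (poissonP_nonneg h₂ k₂), ← mul_assoc]
    apply mul_le_mul_of_nonneg_right _ (poissonP_nonneg h₂ k₂)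
    exact mul_le_mul_of_nonneg_right (hpay _) (poissonP_nonneg h₁ k₁)
  have hcomm := Summable.tsum_comm (f := f) hsum
  unfold betValue
  rw [show (∑' k₁ : ℕ, ∑' k₂ : ℕ, pay (n₁ + k₁, n₂ + k₂) * poissonP (lam₁ * (T - t)) k₁
      * poissonP (lam₂ * (T - t)) k₂) = ∑' (b : ℕ) (c : ℕ), f b c from rfl]
  rw [← hcomm]
  refine tsum_congr fun k₂ => tsum_congr fun k₁ => ?_
  simp only [hfdef, Prod.swap]
  ring

/-- Sensitivity of a European bet value to the intensities:
`∂X/∂λᵢ = (T−t) · δᵢX`, where `δᵢ` is the forward difference in the `i`-th score. -/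
theorem betValue_deriv_intensity
    (T t lam₂ : ℝ) (hT : 0 < T) (ht : t ∈ Set.Icc (0 : ℝ) T) (hlam₂ : 0 < lam₂)
    (pay : ℕ × ℕ → ℝ) (hpay : ∃ C : ℝ, ∀ p : ℕ × ℕ, |pay p| ≤ C) :
    ∀ lam₁ : ℝ, 0 < lam₁ → ∀ n₁ n₂ : ℕ,
      HasDerivAt (fun l : ℝ => betValue l lam₂ T pay t n₁ n₂)
        ((T - t) * (betValue lam₁ lam₂ T pay t (n₁ + 1) n₂
          - betValue lam₁ lam₂ T pay t n₁ n₂)) lam₁ ∧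
      HasDerivAt (fun l : ℝ => betValue lam₁ l T pay t n₁ n₂)
        ((T - t) * (betValue lam₁ lam₂ T pay t n₁ (n₂ + 1)
          - betValue lam₁ lam₂ T pay t n₁ n₂)) lam₂ := by
  obtain ⟨C, hC⟩ := hpay
  intro lam₁ hlam₁ n₁ n₂
  have hτ : 0 ≤ T - t := sub_nonneg.mpr ht.2
  constructor
  · exact half_deriv T t lam₂ hτ hlam₂.le pay C hC lam₁ hlam₁ n₁ n₂
  · set pay' : ℕ × ℕ → ℝ := fun p => pay p.swap with hpay'def
    have hC' : ∀ p, |pay' p| ≤ C := fun p => hC p.swap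
    have hpay'' : (fun p : ℕ × ℕ => pay' p.swap) = pay := by
      funext p; simp [hpay'def]
    have h := half_deriv T t lam₁ hτ hlam₁.le pay' C hC' lam₂ hlam₂ n₂ n₁
    have heq : ∀ (l : ℝ), 0 ≤ l * (T - t) → ∀ m₁ m₂ : ℕ,
        betValue lam₁ l T pay t m₁ m₂ = betValue l lam₁ T pay' t m₂ m₁ := by
      intro l hl m₁ m₂
      exact betValue_swap lam₁ l T t (mul_nonneg hlam₁.le hτ) hl pay C hC m₁ m₂
    have hval : (T - t) * (betValue lam₂ lam₁ T pay' t (n₂ + 1) n₁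
        - betValue lam₂ lam₁ T pay' t n₂ n₁)
        = (T - t) * (betValue lam₁ lam₂ T pay t n₁ (n₂ + 1)
          - betValue lam₁ lam₂ T pay t n₁ n₂) := by
      rw [heq lam₂ (mul_nonneg hlam₂.le hτ) n₁ (n₂ + 1), heq lam₂ (mul_nonneg hlam₂.le hτ) n₁ n₂]
    rw [← hval]
    apply h.congr_of_eventuallyEq
    filter_upwards [eventually_gt_nhds hlam₂] with l hl
    exact heq l (mul_nonneg hl.le hτ) n₁ n₂
end
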